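/- Let N ≥ 2 and M be integers with M ≠ 0, let q ∈ ℂ with 0 < |q| < 1, let h be a nonzero integer, and set p = q^{Nh}, assuming 0 < |p| < 1. Define 𝒴_{N,p,q,M}(x) = ∏_{k=1}^{S} [ Θ_{q^{2N}}(x² p^{−k})² Θ_{q^{2N}}(x² q² p^{k}) Θ_{q^{2N}}(x² q^{−2} p^{k}) ] / [ Θ_{q^{2N}}(x² p^{k})² Θ_{q^{2N}}(x² q² p^{−k}) Θ_{q^{2N}}(x² q^{−2} p^{−k}) ], with S = NM for M > 0 and S = N|M| − 1 for M < 0. Then 𝒴_{N,p,q,M}(x) = 1 for every x ∈ ℂ for which all the theta factors are defined and nonzero. -/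

import Mathlib

open Complex

/-- The infinite `q`-Pochhammer product `(z;p)_∞ = ∏_{n≥0} (1 − z pⁿ)`. -/
noncomputable def qPoch (z p : ℂ) : ℂ := ∏' n : ℕ, (1 - z * p ^ n)

/-- The Jacobi theta function `Θ_p(z) = (z;p)_∞ (p z⁻¹;p)_∞ (p;p)_∞`. -/
noncomputable def jTheta (p z : ℂ) : ℂ := qPoch z p * qPoch (p * z⁻¹) p * qPoch p p

lemma mult_aux (z t : ℂ) (ht : ‖t‖ < 1) :
    Multipliable (fun n : ℕ => 1 - z * t ^ n) := by
  by_cases hz : ∃ n : ℕ, 1 - z * t ^ n = 0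
  · obtain ⟨n0, h0⟩ := hz
    refine ⟨0, ?_⟩
    rw [HasProd]
    apply Filter.Tendsto.congr' _ tendsto_const_nhds
    filter_upwards [Filter.eventually_ge_atTop ({n0} : Finset ℕ)] with s hs
    exact (Finset.prod_eq_zero (hs (Finset.mem_singleton_self n0)) h0).symm
  · push_neg at hz
    apply Complex.multipliable_of_summable_log
    have hg : Summable (fun n : ℕ => (3 / 2 : ℝ) * (‖z‖ * ‖t‖ ^ n)) :=
      (((summable_geometric_of_lt_one (norm_nonneg t) ht)).mul_left _).mul_left _
    apply hg.of_norm_bounded_eventually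
    have h0 : Filter.Tendsto (fun n : ℕ => ‖z‖ * ‖t‖ ^ n) Filter.atTop (nhds 0) := by
      simpa using (tendsto_pow_atTop_nhds_zero_of_lt_one (norm_nonneg t) ht).const_mul ‖z‖
    rw [Nat.cofinite_eq_atTop]
    filter_upwards [h0.eventually_le_const (by norm_num : (0:ℝ) < 1/2)] with n hn
    have hb : ‖-(z * t ^ n)‖ ≤ 1 / 2 := by
      rw [norm_neg, norm_mul, norm_pow]; exact hn
    calc ‖Complex.log (1 - z * t ^ n)‖ = ‖Complex.log (1 + -(z * t ^ n))‖ := by ring_nf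
      _ ≤ 3 / 2 * ‖-(z * t ^ n)‖ := Complex.norm_log_one_add_half_le_self hb
      _ = 3 / 2 * (‖z‖ * ‖t‖ ^ n) := by
          rw [norm_neg, norm_mul, norm_pow]

lemma qPoch_shift (z t : ℂ) (ht : ‖t‖ < 1) :
    qPoch z t = (1 - z) * qPoch (z * t) t := by
  unfold qPoch
  have hm : Multipliable (fun n : ℕ => 1 - z * t ^ (n + 1)) := by
    have := mult_aux (z * t) t ht
    apply this.congr
    intro n; ring
  rw [tprod_eq_zero_mul' (f := fun n : ℕ => 1 - z * t ^ n) hm]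
  simp only [pow_zero, mul_one]
  congr 1
  apply tprod_congr
  intro n; ring

lemma jTheta_step (t w : ℂ) (ht : ‖t‖ < 1) (ht0 : t ≠ 0) (hw : w ≠ 0) :
    jTheta t (t * w) = -w⁻¹ * jTheta t w := by
  unfold jTheta
  have h1 : qPoch w t = (1 - w) * qPoch (w * t) t := qPoch_shift w t ht
  have h2 : qPoch w⁻¹ t = (1 - w⁻¹) * qPoch (w⁻¹ * t) t := qPoch_shift w⁻¹ t ht
  have h3 : t * (t * w)⁻¹ = w⁻¹ := by field_simp
  have h4 : (1 : ℂ) - w⁻¹ = -w⁻¹ * (1 - w) := by field_simp; ring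
  rw [h3, h1, h2, h4]
  have h5 : t * w = w * t := mul_comm _ _
  have h6 : t * w⁻¹ = w⁻¹ * t := mul_comm _ _
  rw [h5, h6]
  ring

lemma jTheta_step' (t w : ℂ) (ht : ‖t‖ < 1) (ht0 : t ≠ 0) (hw : w ≠ 0) :
    jTheta t w = -w * jTheta t (t * w) := by
  rw [jTheta_step t w ht ht0 hw]
  have hww : w * w⁻¹ = 1 := mul_inv_cancel₀ hw
  linear_combination (- jTheta t w) * hww

lemma jTheta_pair (t u v : ℂ) (ht : ‖t‖ < 1) (ht0 : t ≠ 0)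
    (hu : u ≠ 0) (hv : v ≠ 0) (m : ℤ) :
    jTheta t (t ^ m * u) * jTheta t (t ^ m * v)
      = (u * v) ^ (-m) * t ^ (-(m * (m - 1))) * (jTheta t u * jTheta t v) := by
  induction m using Int.induction_on with
  | zero => simp
  | succ m ih =>
    have hm0 : (t : ℂ) ^ (m : ℤ) ≠ 0 := zpow_ne_zero _ ht0
    have hau : t ^ ((m : ℤ) + 1) * u = t * (t ^ (m : ℤ) * u) := by
      rw [zpow_add_one₀ ht0]; ring
    have hav : t ^ ((m : ℤ) + 1) * v = t * (t ^ (m : ℤ) * v) := by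
      rw [zpow_add_one₀ ht0]; ring
    rw [hau, hav, jTheta_step t _ ht ht0 (mul_ne_zero hm0 hu),
      jTheta_step t _ ht ht0 (mul_ne_zero hm0 hv)]
    have he : t ^ (-(((m : ℤ) + 1) * (((m : ℤ) + 1) - 1)))
        = t ^ (-((m : ℤ) * ((m : ℤ) - 1))) * (t ^ (m : ℤ))⁻¹ * (t ^ (m : ℤ))⁻¹ := by
      rw [← zpow_neg t m, ← zpow_add₀ ht0, ← zpow_add₀ ht0]; congr 1; ring
    have hUV : (u * v) ^ (-((m : ℤ) + 1)) = (u * v) ^ (-(m : ℤ)) * u⁻¹ * v⁻¹ := by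
      rw [show (-((m : ℤ) + 1)) = -(m : ℤ) + (-1) by ring, zpow_add₀ (mul_ne_zero hu hv),
        zpow_neg_one, mul_inv]
      ring
    rw [he, hUV, mul_inv, mul_inv]
    linear_combination ((t ^ (m : ℤ))⁻¹ * u⁻¹ * ((t ^ (m : ℤ))⁻¹ * v⁻¹)) * ih
  | pred m ih =>
    have hm0 : (t : ℂ) ^ (-(m : ℤ) - 1) ≠ 0 := zpow_ne_zero _ ht0
    have hau : t ^ (-(m : ℤ)) * u = t * (t ^ (-(m : ℤ) - 1) * u) := by
      rw [show (-(m : ℤ)) = (-(m : ℤ) - 1) + 1 by ring, zpow_add_one₀ ht0]; ring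
    have hav : t ^ (-(m : ℤ)) * v = t * (t ^ (-(m : ℤ) - 1) * v) := by
      rw [show (-(m : ℤ)) = (-(m : ℤ) - 1) + 1 by ring, zpow_add_one₀ ht0]; ring
    have hsu : jTheta t (t ^ (-(m : ℤ) - 1) * u)
        = -(t ^ (-(m : ℤ) - 1) * u) * jTheta t (t ^ (-(m : ℤ)) * u) := by
      rw [hau]; exact jTheta_step' t _ ht ht0 (mul_ne_zero hm0 hu)
    have hsv : jTheta t (t ^ (-(m : ℤ) - 1) * v)
        = -(t ^ (-(m : ℤ) - 1) * v) * jTheta t (t ^ (-(m : ℤ)) * v) := by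
      rw [hav]; exact jTheta_step' t _ ht ht0 (mul_ne_zero hm0 hv)
    rw [hsu, hsv]
    have he : t ^ (-((-(m : ℤ) - 1) * ((-(m : ℤ) - 1) - 1)))
        = t ^ (-((-(m : ℤ)) * ((-(m : ℤ)) - 1))) * t ^ (-(m : ℤ) - 1) * t ^ (-(m : ℤ) - 1) := by
      rw [← zpow_add₀ ht0, ← zpow_add₀ ht0]; congr 1; ring
    have hUV : (u * v) ^ (-(-(m : ℤ) - 1)) = (u * v) ^ (-(-(m : ℤ))) * (u * v) := by
      rw [show (-(-(m : ℤ) - 1)) = -(-(m : ℤ)) + 1 by ring, zpow_add_one₀ (mul_ne_zero hu hv)]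
    rw [he, hUV]
    linear_combination (t ^ (-(m : ℤ) - 1) * u) * (t ^ (-(m : ℤ) - 1) * v) * ih

lemma key_lemma (t b1 b2 b3 : ℂ) (ht : ‖t‖ < 1) (ht0 : t ≠ 0)
    (hb1 : b1 ≠ 0) (hb2 : b2 ≠ 0) (hb3 : b3 ≠ 0) (m : ℤ)
    (hcon : b2 * b3 = b1 ^ 2 * t ^ (-(2 * m))) :
    jTheta t (t ^ (-m) * b1) ^ 2 * jTheta t (t ^ m * b2) * jTheta t (t ^ m * b3)
      = jTheta t b1 ^ 2 * jTheta t b2 * jTheta t b3 := by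
  have P1 := jTheta_pair t b1 b1 ht ht0 hb1 hb1 (-m)
  have P2 := jTheta_pair t b2 b3 ht ht0 hb2 hb3 m
  have h1 : (b1 * b1) ^ (-(-m)) * (b2 * b3) ^ (-m) = t ^ (2 * m * m) := by
    rw [hcon, sq, mul_zpow (b1 * b1) (t ^ (-(2 * m))) (-m), neg_neg, ← mul_assoc,
      ← zpow_add₀ (mul_ne_zero hb1 hb1), add_neg_cancel, zpow_zero, one_mul, ← zpow_mul]
    congr 1; ring
  have h2 : t ^ (-(-m * (-m - 1))) * t ^ (-(m * (m - 1))) * t ^ (2 * m * m) = 1 := by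
    rw [← zpow_add₀ ht0, ← zpow_add₀ ht0,
      show -(-m * (-m - 1)) + -(m * (m - 1)) + 2 * m * m = 0 by ring, zpow_zero]
  rw [sq (jTheta t (t ^ (-m) * b1)), sq (jTheta t b1)]
  linear_combination (jTheta t (t ^ m * b2) * jTheta t (t ^ m * b3)) * P1
    + ((b1 * b1) ^ (-(-m)) * t ^ (-(-m * (-m - 1))) * (jTheta t b1 * jTheta t b1)) * P2
    + (t ^ (-(-m * (-m - 1))) * t ^ (-(m * (m - 1)))
        * (jTheta t b1 * jTheta t b1 * (jTheta t b2 * jTheta t b3))) * h1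
    + (jTheta t b1 * jTheta t b1 * (jTheta t b2 * jTheta t b3)) * h2


/-- The exchange structure function `𝒴_{N,p,q,M}(x)` of the trace operators `t(z)`:
`𝒴(x) = ∏_{k=1}^{S} Θ(x²p^{−k})²Θ(x²q²p^k)Θ(x²q^{−2}p^k) /
(Θ(x²p^k)²Θ(x²q²p^{−k})Θ(x²q^{−2}p^{−k}))` with `S = NM` for `M>0`, `S = N|M|−1` for `M<0`. -/
noncomputable def Yfun (N : ℕ) (M : ℤ) (q p : ℂ) (x : ℂ) : ℂ :=
  ∏ k ∈ Finset.Icc 1 (if 0 < M then N * M.toNat else N * (-M).toNat - 1),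
    jTheta (q ^ (2 * N)) (x ^ 2 * p ^ (-(k : ℤ))) ^ 2
      * jTheta (q ^ (2 * N)) (x ^ 2 * q ^ 2 * p ^ (k : ℤ))
      * jTheta (q ^ (2 * N)) (x ^ 2 * q ^ (-2 : ℤ) * p ^ (k : ℤ))
      / (jTheta (q ^ (2 * N)) (x ^ 2 * p ^ (k : ℤ)) ^ 2
        * jTheta (q ^ (2 * N)) (x ^ 2 * q ^ 2 * p ^ (-(k : ℤ)))
        * jTheta (q ^ (2 * N)) (x ^ 2 * q ^ (-2 : ℤ) * p ^ (-(k : ℤ))))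

/-- When `p = q^{Nh}` with `h` a nonzero integer, the exchange function `𝒴_{N,p,q,M}` is
identically equal to `1` (so that `t(z)` realizes an Abelian subalgebra), at every point `x`
where all the theta factors are defined and nonzero. -/
theorem stmt12 (N : ℕ) (hN : 2 ≤ N) (M : ℤ) (hM : M ≠ 0) (h : ℤ) (hh : h ≠ 0)
    (q : ℂ) (hq0 : 0 < ‖q‖) (hq1 : ‖q‖ < 1)
    (hp0 : 0 < ‖q ^ ((N : ℤ) * h)‖)
    (hp1 : ‖q ^ ((N : ℤ) * h)‖ < 1)
    (x : ℂ)
    (hdef : ∀ k ∈ Finset.Icc 1 (if 0 < M then N * M.toNat else N * (-M).toNat - 1),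
      jTheta (q ^ (2 * N)) (x ^ 2 * (q ^ ((N : ℤ) * h)) ^ (-(k : ℤ))) ≠ 0
      ∧ jTheta (q ^ (2 * N)) (x ^ 2 * q ^ 2 * (q ^ ((N : ℤ) * h)) ^ (k : ℤ)) ≠ 0
      ∧ jTheta (q ^ (2 * N)) (x ^ 2 * q ^ (-2 : ℤ) * (q ^ ((N : ℤ) * h)) ^ (k : ℤ)) ≠ 0
      ∧ jTheta (q ^ (2 * N)) (x ^ 2 * (q ^ ((N : ℤ) * h)) ^ (k : ℤ)) ≠ 0
      ∧ jTheta (q ^ (2 * N)) (x ^ 2 * q ^ 2 * (q ^ ((N : ℤ) * h)) ^ (-(k : ℤ))) ≠ 0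
      ∧ jTheta (q ^ (2 * N)) (x ^ 2 * q ^ (-2 : ℤ) * (q ^ ((N : ℤ) * h)) ^ (-(k : ℤ))) ≠ 0) :
    Yfun N M q (q ^ ((N : ℤ) * h)) x = 1 := by
  have hq : q ≠ 0 := by
    intro hc; rw [hc] at hq0; simp at hq0
  have ht0 : (q : ℂ) ^ (2 * N) ≠ 0 := pow_ne_zero _ hq
  have ht : ‖q ^ (2 * N)‖ < 1 := by
    rw [norm_pow]
    exact pow_lt_one₀ (norm_nonneg q) hq1 (by omega)
  unfold Yfun
  apply Finset.prod_eq_one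
  intro k hk
  obtain ⟨h1, h2, h3, h4, h5, h6⟩ := hdef k hk
  by_cases hx : x = 0
  · subst hx
    simp only [ne_eq, zero_pow (two_ne_zero), zero_mul] at h1 h2 h3 h4 h5 h6 ⊢
    exact div_self (by exact mul_ne_zero (mul_ne_zero (pow_ne_zero 2 h4) h5) h6)
  · have hx2 : x ^ 2 ≠ 0 := pow_ne_zero 2 hx
    have hq2 : (q : ℂ) ^ 2 * q ^ (-2 : ℤ) = 1 := by
      rw [← zpow_natCast q 2, ← zpow_add₀ hq]; norm_num
    have hq2' : (q : ℂ) ^ 2 ≠ 0 := pow_ne_zero 2 hq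
    have hqm2 : (q : ℂ) ^ (-2 : ℤ) ≠ 0 := zpow_ne_zero _ hq
    have hzp : ∀ j : ℤ, (q ^ ((N : ℤ) * h)) ^ j = q ^ ((N : ℤ) * h * j) := fun j => by
      rw [← zpow_mul]
    have hcast : ((2 * N : ℕ) : ℤ) = 2 * (N : ℤ) := by push_cast; ring
    have hzt : ∀ j : ℤ, (q ^ (2 * N)) ^ j = q ^ (2 * (N : ℤ) * j) := fun j => by
      rw [← zpow_natCast q (2 * N), ← zpow_mul, hcast]
    have hpk : (q : ℂ) ^ ((N : ℤ) * h * (k : ℤ)) ≠ 0 := zpow_ne_zero _ hq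
    have hpk' : (q : ℂ) ^ ((N : ℤ) * h * (-(k : ℤ))) ≠ 0 := zpow_ne_zero _ hq
    simp only [hzp] at h4 h5 h6 ⊢
    have A1 : x ^ 2 * q ^ ((N : ℤ) * h * (-(k : ℤ)))
        = (q ^ (2 * N)) ^ (-(h * (k : ℤ))) * (x ^ 2 * q ^ ((N : ℤ) * h * (k : ℤ))) := by
      rw [hzt,
        show (N : ℤ) * h * (-(k : ℤ))
          = 2 * (N : ℤ) * (-(h * (k : ℤ))) + (N : ℤ) * h * (k : ℤ) by ring,
        zpow_add₀ hq]
      ring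
    have A2 : x ^ 2 * q ^ 2 * q ^ ((N : ℤ) * h * (k : ℤ))
        = (q ^ (2 * N)) ^ (h * (k : ℤ)) * (x ^ 2 * q ^ 2 * q ^ ((N : ℤ) * h * (-(k : ℤ)))) := by
      rw [hzt,
        show (N : ℤ) * h * (k : ℤ)
          = 2 * (N : ℤ) * (h * (k : ℤ)) + (N : ℤ) * h * (-(k : ℤ)) by ring,
        zpow_add₀ hq]
      ring
    have A3 : x ^ 2 * q ^ (-2 : ℤ) * q ^ ((N : ℤ) * h * (k : ℤ))
        = (q ^ (2 * N)) ^ (h * (k : ℤ)) * (x ^ 2 * q ^ (-2 : ℤ) * q ^ ((N : ℤ) * h * (-(k : ℤ)))) := by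
      rw [hzt,
        show (N : ℤ) * h * (k : ℤ)
          = 2 * (N : ℤ) * (h * (k : ℤ)) + (N : ℤ) * h * (-(k : ℤ)) by ring,
        zpow_add₀ hq]
      ring
    have hA : (q : ℂ) ^ ((N : ℤ) * h * (-(k : ℤ))) * q ^ ((N : ℤ) * h * (-(k : ℤ)))
        = q ^ ((N : ℤ) * h * (k : ℤ)) * q ^ ((N : ℤ) * h * (k : ℤ))
          * q ^ (2 * (N : ℤ) * (-(2 * (h * (k : ℤ))))) := by
      rw [← zpow_add₀ hq, ← zpow_add₀ hq, ← zpow_add₀ hq]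
      congr 1; ring
    have hcon : (x ^ 2 * q ^ 2 * q ^ ((N : ℤ) * h * (-(k : ℤ))))
          * (x ^ 2 * q ^ (-2 : ℤ) * q ^ ((N : ℤ) * h * (-(k : ℤ))))
        = (x ^ 2 * q ^ ((N : ℤ) * h * (k : ℤ))) ^ 2 * (q ^ (2 * N)) ^ (-(2 * (h * (k : ℤ)))) := by
      rw [hzt, sq]
      linear_combination (x ^ 2 * x ^ 2 * (q ^ ((N : ℤ) * h * (-(k : ℤ)))
          * q ^ ((N : ℤ) * h * (-(k : ℤ))))) * hq2
        + (x ^ 2 * x ^ 2) * hA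
    rw [A1, A2, A3,
      key_lemma (q ^ (2 * N)) _ _ _ ht ht0 (mul_ne_zero hx2 hpk)
        (mul_ne_zero (mul_ne_zero hx2 hq2') hpk') (mul_ne_zero (mul_ne_zero hx2 hqm2) hpk')
        (h * (k : ℤ)) hcon]
    exact div_self (mul_ne_zero (mul_ne_zero (pow_ne_zero 2 h4) h5) h6)
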